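/- If m > 1 and h = 1, then the two-weight code C_K is a minimal linear code: its two nonzero weights w_1 = 2nq^{m_1−1}(q−1) and w_2 = 2nq^{m_1+m−1}(q−1)/(q^m−1) satisfy w_min/w_max > (q−1)/q. -/

import Mathlib

open scoped Classical

/-- The codeword `c(a,b)` of the code `C_K` with `K = F_{q^{m_1}} × D`,
`D = {ω^{hi} : 0 ≤ i < n}`:
`c(a,b) = (Tr^{m_1}_1(ax)+Tr^m_1(by) | Tr^{m_1}_1(ax)+Tr^m_1((a+b)y))_{(x,y) ∈ K}`,
indexed by `(x, i, half) ∈ E1 × Fin n × Bool` where `y = ω^{hi}`. -/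
noncomputable def cword (Kq E1 E : Type*) [Field Kq] [Field E1] [Field E]
    [Algebra Kq E1] [Algebra Kq E] [Algebra E1 E]
    (ω : E) (h n : ℕ) (a : E1) (b : E) : E1 × Fin n × Bool → Kq :=
  fun z =>
    if z.2.2 then
      Algebra.trace Kq E1 (a * z.1) + Algebra.trace Kq E (b * ω ^ (h * (z.2.1 : ℕ)))
    else
      Algebra.trace Kq E1 (a * z.1) +
        Algebra.trace Kq E ((algebraMap E1 E a + b) * ω ^ (h * (z.2.1 : ℕ)))


open Finset



lemma fiberCard {L K : Type*} [Fintype L] [Fintype K] [DecidableEq K]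
    [AddCommGroup L] [AddCommGroup K]
    (f : L → K) (hadd : ∀ x y, f (x + y) = f x + f y) (hf : Function.Surjective f) (c : K) :
    Fintype.card K * (Finset.univ.filter fun x => f x = c).card = Fintype.card L := by
  have key : ∀ c' : K, (univ.filter fun x => f x = c').card
      = (univ.filter fun x => f x = c).card := by
    intro c'
    obtain ⟨d, hd⟩ := hf (c' - c)
    apply Finset.card_bij' (fun x _ => x - d) (fun x _ => x + d)
    · intro x hx
      simp only [mem_filter, mem_univ, true_and] at hx ⊢
      have h := hadd (x - d) d
      simp only [sub_add_cancel] at h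
      rw [hx, hd] at h
      have h2 : f (x - d) = c' - (c' - c) := eq_sub_of_add_eq h.symm
      rw [h2]; abel
    · intro x hx
      simp only [mem_filter, mem_univ, true_and] at hx ⊢
      rw [hadd, hx, hd]; abel
    · intros; simp
    · intros; simp
  have h2 : Fintype.card L = ∑ c' : K, (univ.filter fun x => f x = c').card := by
    rw [← Finset.card_univ (α := L)]
    exact Finset.card_eq_sum_card_fiberwise (fun x _ => Finset.mem_univ (f x))
  rw [h2]
  simp only [key]
  rw [Finset.sum_const, Finset.card_univ, smul_eq_mul]

lemma countPeriodic (P : ℕ → Prop) [DecidablePred P] (N : ℕ)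
    (hper : ∀ i, P (i + N) ↔ P i) (k : ℕ) :
    ((Finset.range (k * N)).filter P).card = k * ((Finset.range N).filter P).card := by
  have hshift : ∀ k i, P (i + k * N) ↔ P i := by
    intro k
    induction k with
    | zero => simp
    | succ k ih =>
      intro i
      have h : i + (k + 1) * N = (i + k * N) + N := by ring
      rw [h, hper, ih]
  induction k with
  | zero => simp
  | succ k ih =>
    have h1 : (k + 1) * N = k * N + N := by ring
    rw [h1]
    rw [Finset.card_filter, Finset.sum_range_add, ← Finset.card_filter, ← Finset.card_filter, ih]
    have h2 : (Finset.range N).filter (fun i => P (k * N + i)) = (Finset.range N).filter P := by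
      apply Finset.filter_congr
      intro i _
      rw [add_comm]
      simp only [hshift k i]
    rw [h2]
    ring


lemma ordMin {E : Type*} [Field E] [Fintype E]
    (ω : E) (hω : ∀ x : E, x ≠ 0 → ∃ k, x = ω ^ k)
    (d : ℕ) (hd : 0 < d) (h1 : ω ^ d = 1) : Fintype.card E - 1 ≤ d := by
  classical
  have hsub : (Finset.univ.filter fun x : E => x ≠ 0)
      ⊆ (Finset.range d).image (ω ^ ·) := by
    intro x hx
    simp only [Finset.mem_filter, Finset.mem_univ, true_and] at hx
    obtain ⟨k, rfl⟩ := hω x hx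
    refine Finset.mem_image.2 ⟨k % d, Finset.mem_range.2 (Nat.mod_lt _ hd), ?_⟩
    conv_rhs => rw [← Nat.div_add_mod k d]
    rw [pow_add, pow_mul, h1, one_pow, one_mul]
  have h2 := Finset.card_le_card hsub
  have h3 : ((Finset.range d).image (ω ^ ·)).card ≤ d :=
    le_trans Finset.card_image_le (by simp)
  have h4 : (Finset.univ.filter fun x : E => x ≠ 0).card = Fintype.card E - 1 := by
    rw [Finset.filter_ne', Finset.card_erase_of_mem (Finset.mem_univ _), Finset.card_univ]
  omega

lemma omegaNeZero {E : Type*} [Field E] [Fintype E]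
    (ω : E) (hω : ∀ x : E, x ≠ 0 → ∃ k, x = ω ^ k) (hcard : 2 < Fintype.card E) :
    ω ≠ 0 := by
  classical
  intro h0
  have hsub : (Finset.univ : Finset E) ⊆ {0, 1} := by
    intro x _
    by_cases hx : x = 0
    · simp [hx]
    · obtain ⟨k, rfl⟩ := hω x hx
      rcases Nat.eq_zero_or_pos k with hk | hk
      · simp [hk]
      · exact absurd (by rw [h0, zero_pow (by omega : k ≠ 0)]) hx
  have := Finset.card_le_card hsub
  have h2 : ({0, 1} : Finset E).card ≤ 2 :=
    le_trans (Finset.card_insert_le _ _) (by simp)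
  rw [Finset.card_univ] at this
  omega

lemma countRangePow {E : Type*} [Field E] [Fintype E]
    (ω : E) (hω : ∀ x : E, x ≠ 0 → ∃ k, x = ω ^ k) (hcard : 2 < Fintype.card E)
    (P : E → Prop) [DecidablePred P] (hP0 : ¬ P 0) :
    ((Finset.range (Fintype.card E - 1)).filter fun i => P (ω ^ i)).card
      = (Finset.univ.filter P).card := by
  classical
  have hω0 : ω ≠ 0 := omegaNeZero ω hω hcard
  have hone : ω ^ (Fintype.card E - 1) = 1 := FiniteField.pow_card_sub_one_eq_one ω hω0
  have key : ∀ i j : ℕ, i < j → j < Fintype.card E - 1 → ω ^ i = ω ^ j → False := by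
    intro i j hij hj hcon
    have h1 : ω ^ (j - i) = 1 := by
      have h2 : ω ^ i * ω ^ (j - i) = ω ^ i * 1 := by
        rw [← pow_add, mul_one, show i + (j - i) = j by omega]
        exact hcon.symm
      exact mul_left_cancel₀ (pow_ne_zero i hω0) h2
    have := ordMin ω hω (j - i) (by omega) h1
    omega
  apply Finset.card_bij (fun i _ => ω ^ i)
  · intro i hi
    simp only [Finset.mem_filter, Finset.mem_range, Finset.mem_univ, true_and] at hi ⊢
    exact hi.2
  · intro i hi j hj hcon
    simp only [Finset.mem_filter, Finset.mem_range] at hi hj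
    rcases lt_trichotomy i j with h | h | h
    · exact absurd hcon (fun hc => key i j h hj.1 hc)
    · exact h
    · exact absurd hcon.symm (fun hc => key j i h hi.1 hc)
  · intro x hx
    simp only [Finset.mem_filter, Finset.mem_univ, true_and] at hx
    have hx0 : x ≠ 0 := fun h => hP0 (h ▸ hx)
    obtain ⟨k, rfl⟩ := hω x hx0
    have hpos : 0 < Fintype.card E - 1 := by omega
    refine ⟨k % (Fintype.card E - 1), ?_, ?_⟩
    · simp only [Finset.mem_filter, Finset.mem_range]
      constructor
      · exact Nat.mod_lt _ hpos
      · rw [show ω ^ (k % (Fintype.card E - 1)) = ω ^ k from ?_]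
        · exact hx
        · conv_rhs => rw [← Nat.div_add_mod k (Fintype.card E - 1)]
          rw [pow_add, pow_mul, hone, one_pow, one_mul]
    · conv_rhs => rw [← Nat.div_add_mod k (Fintype.card E - 1)]
      rw [pow_add, pow_mul, hone, one_pow, one_mul]

lemma memRangeAlgebraMap {Kq E : Type*} [Field Kq] [Fintype Kq] [Field E] [Fintype E]
    [Algebra Kq E] (x : E) (hx : x ^ (Fintype.card Kq - 1) = 1) :
    ∃ u : Kq, u ≠ 0 ∧ algebraMap Kq E u = x := by
  classical
  set q := Fintype.card Kq with hqdef
  have hq : 1 < q := Fintype.one_lt_card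
  set p : Polynomial E := Polynomial.X ^ (q - 1) - Polynomial.C 1 with hp
  have hp0 : p ≠ 0 := Polynomial.X_pow_sub_C_ne_zero (by omega) 1
  set S : Finset E := Finset.univ.filter (fun y => y ^ (q - 1) = 1) with hS
  have hScard : S.card ≤ q - 1 := by
    have hsub : S ⊆ p.roots.toFinset := by
      intro y hy
      simp only [hS, Finset.mem_filter, Finset.mem_univ, true_and] at hy
      rw [Multiset.mem_toFinset, Polynomial.mem_roots hp0]
      simp [hp, Polynomial.IsRoot, hy]
    calc S.card ≤ p.roots.toFinset.card := Finset.card_le_card hsub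
      _ ≤ Multiset.card p.roots := Multiset.toFinset_card_le _
      _ ≤ p.natDegree := Polynomial.card_roots' p
      _ = q - 1 := by
          rw [hp, show (Polynomial.C 1 : Polynomial E) = Polynomial.C (1:E) from rfl]
          exact Polynomial.natDegree_X_pow_sub_C
  set T : Finset E := (Finset.univ.filter fun u : Kq => u ≠ 0).image (algebraMap Kq E) with hT
  have hTS : T ⊆ S := by
    intro y hy
    simp only [hT, Finset.mem_image, Finset.mem_filter, Finset.mem_univ, true_and] at hy
    obtain ⟨u, hu, rfl⟩ := hy
    simp only [hS, Finset.mem_filter, Finset.mem_univ, true_and]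
    rw [← map_pow, FiniteField.pow_card_sub_one_eq_one u hu, map_one]
  have hTcard : T.card = q - 1 := by
    rw [hT, Finset.card_image_of_injective _ (algebraMap Kq E).injective,
      Finset.filter_ne', Finset.card_erase_of_mem (Finset.mem_univ _), Finset.card_univ]
  have hST : S = T := (Finset.eq_of_subset_of_card_le hTS (by omega)).symm
  have hxS : x ∈ S := by simp [hS, hx]
  rw [hST, hT] at hxS
  simp only [Finset.mem_image, Finset.mem_filter, Finset.mem_univ, true_and] at hxS
  obtain ⟨u, hu, h⟩ := hxS
  exact ⟨u, hu, h⟩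

lemma traceFiber {K L : Type*} [Field K] [Fintype K] [Field L] [Fintype L] [Algebra K L]
    [DecidableEq K] (b : L) (hb : b ≠ 0) (c : K)
    (fiberCard : ∀ (f : L → K), (∀ x y, f (x + y) = f x + f y) → Function.Surjective f →
      ∀ c : K, Fintype.card K * (Finset.univ.filter fun x => f x = c).card = Fintype.card L) :
    Fintype.card K * (Finset.univ.filter fun x : L => Algebra.trace K L (b * x) = c).card
      = Fintype.card L := by
  apply fiberCard (fun x => Algebra.trace K L (b * x))
  · intro x y; rw [mul_add, map_add]
  · intro c'
    obtain ⟨y, hy⟩ := Algebra.trace_surjective K L c'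
    exact ⟨b⁻¹ * y, by show Algebra.trace K L (b * (b⁻¹ * y)) = c'; rw [← mul_assoc, mul_inv_cancel₀ hb, one_mul, hy]⟩

lemma weight_formula (q m m1 n : ℕ) (Kq E1 E : Type*)
    [Field Kq] [Fintype Kq] [DecidableEq Kq]
    [Field E1] [Fintype E1] [Field E] [Fintype E]
    [Algebra Kq E1] [Algebra Kq E] [Algebra E1 E] [IsScalarTower Kq E1 E]
    (hq : q = Fintype.card Kq) (hqodd : Odd q)
    (hm1 : m1 ∣ m) (hm : 1 < m)
    (hc1 : Fintype.card E1 = q ^ m1) (hc : Fintype.card E = q ^ m)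
    (ω : E) (hω : ∀ x : E, x ≠ 0 → ∃ k : ℕ, x = ω ^ k)
    (hn0 : 0 < n) (hn : (q ^ m - 1) / (q - 1) ∣ n) (a : E1) (b : E) :
    (a ≠ 0 → (Finset.univ.filter fun z : E1 × Fin n × Bool =>
        cword Kq E1 E ω 1 n a b z ≠ 0).card
      = 2 * (n / ((q ^ m - 1) / (q - 1))) * (q ^ (m1 - 1) * (q ^ m - 1))) ∧
    (a = 0 → b ≠ 0 → (Finset.univ.filter fun z : E1 × Fin n × Bool =>
        cword Kq E1 E ω 1 n a b z ≠ 0).card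
      = 2 * (n / ((q ^ m - 1) / (q - 1))) * (q ^ (m1 - 1) * q ^ m)) := by
  classical
  -- basic numeric facts
  have hq2 : 2 ≤ q := hq ▸ Fintype.one_lt_card
  have hq3 : 3 ≤ q := by
    rcases hqodd with ⟨k, hk⟩; omega
  have hm1pos : 1 ≤ m1 := by
    rcases hm1 with ⟨c, rfl⟩
    by_contra h
    interval_cases m1 <;> omega
  have hqm : q ^ 2 ≤ q ^ m := Nat.pow_le_pow_right (by omega) hm
  have hq2' : q * q = q ^ 2 := by ring
  have hqmbig : q + 1 ≤ q ^ m := by nlinarith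
  set N : ℕ := (q ^ m - 1) / (q - 1) with hN
  have hdvd : (q - 1) ∣ (q ^ m - 1) := by
    have := Nat.sub_dvd_pow_sub_pow q 1 m
    simpa using this
  have hNmul : N * (q - 1) = q ^ m - 1 := Nat.div_mul_cancel hdvd
  have hNpos : 0 < N := by
    rcases Nat.eq_zero_or_pos N with h | h
    · rw [h, zero_mul] at hNmul; omega
    · exact h
  set T : ℕ := n / N with hT
  have hnT : n = T * N := (Nat.div_mul_cancel hn).symm
  have hTpos : 0 < T := by
    rcases Nat.eq_zero_or_pos T with h | h
    · rw [h, zero_mul] at hnT; omega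
    · exact h
  have hcE2 : 2 < Fintype.card E := by
    rw [hc]
    have h4 : 4 ≤ q ^ 2 := by nlinarith
    omega
  have hω0 : ω ≠ 0 := omegaNeZero ω hω hcE2
  -- trace fiber counts
  have hfibE1 : ∀ (a0 : E1), a0 ≠ 0 → ∀ c : Kq,
      (Finset.univ.filter fun x : E1 => Algebra.trace Kq E1 (a0 * x) = c).card
        = q ^ (m1 - 1) := by
    intro a0 ha0 c
    have h1 := traceFiber (K := Kq) (L := E1) a0 ha0 c (fun f h1 h2 c => fiberCard f h1 h2 c)
    rw [← hq, hc1] at h1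
    have h2 : q ^ m1 = q * q ^ (m1 - 1) := by
      rw [← pow_succ']
      congr 1
      omega
    rw [h2] at h1
    exact Nat.eq_of_mul_eq_mul_left (by omega) h1
  have hfibE : ∀ (b0 : E), b0 ≠ 0 → ∀ c : Kq,
      (Finset.univ.filter fun x : E => Algebra.trace Kq E (b0 * x) = c).card
        = q ^ (m - 1) := by
    intro b0 hb0 c
    have h1 := traceFiber (K := Kq) (L := E) b0 hb0 c (fun f h1 h2 c => fiberCard f h1 h2 c)
    rw [← hq, hc] at h1
    have h2 : q ^ m = q * q ^ (m - 1) := by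
      rw [← pow_succ']
      congr 1
      omega
    rw [h2] at h1
    exact Nat.eq_of_mul_eq_mul_left (by omega) h1
  -- count of nonzero-trace over E1, shifted
  have hcnt1 : ∀ (a0 : E1), a0 ≠ 0 → ∀ c : Kq,
      (Finset.univ.filter fun x : E1 => Algebra.trace Kq E1 (a0 * x) + c ≠ 0).card
        = q ^ m1 - q ^ (m1 - 1) := by
    intro a0 ha0 c
    have hpart := Finset.card_filter_add_card_filter_not
      (s := (Finset.univ : Finset E1))
      (p := fun x : E1 => Algebra.trace Kq E1 (a0 * x) + c = 0)
    have he : (Finset.univ.filter fun x : E1 => Algebra.trace Kq E1 (a0 * x) + c = 0)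
        = (Finset.univ.filter fun x : E1 => Algebra.trace Kq E1 (a0 * x) = -c) := by
      apply Finset.filter_congr
      intro x _
      constructor
      · intro h; exact eq_neg_of_add_eq_zero_left h
      · intro h; rw [h]; exact neg_add_cancel c
    rw [he, hfibE1 a0 ha0 (-c)] at hpart
    have hcard : (Finset.univ : Finset E1).card = q ^ m1 := by
      rw [Finset.card_univ, hc1]
    rw [hcard] at hpart
    have hre : (Finset.univ.filter fun x : E1 =>
        ¬(Algebra.trace Kq E1 (a0 * x) + c = 0)) =
        (Finset.univ.filter fun x : E1 => Algebra.trace Kq E1 (a0 * x) + c ≠ 0) := rfl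
    rw [hre] at hpart
    have hpow : q ^ (m1 - 1) ≤ q ^ m1 := Nat.pow_le_pow_right (by omega) (by omega)
    omega
  -- number of i < n with Tr(b0 ω^i) ≠ 0
  have hZ : ∀ (b0 : E), b0 ≠ 0 →
      ((Finset.range n).filter fun i => Algebra.trace Kq E (b0 * ω ^ i) ≠ 0).card
        = T * q ^ (m - 1) := by
    intro b0 hb0
    set P : ℕ → Prop := fun i => Algebra.trace Kq E (b0 * ω ^ i) ≠ 0 with hP
    obtain ⟨u, hu0, huω⟩ : ∃ u : Kq, u ≠ 0 ∧ algebraMap Kq E u = ω ^ N := by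
      apply memRangeAlgebraMap
      rw [← hq, ← pow_mul]
      have hNE : N * (q - 1) = Fintype.card E - 1 := by rw [hNmul, hc]
      rw [hNE]
      exact FiniteField.pow_card_sub_one_eq_one ω hω0
    have hper : ∀ i, P (i + N) ↔ P i := by
      intro i
      have harg : b0 * ω ^ (i + N) = u • (b0 * ω ^ i) := by
        rw [Algebra.smul_def, huω, pow_add]; ring
      simp only [hP]
      rw [harg, map_smul, smul_eq_mul]
      simp [mul_ne_zero_iff, hu0]
    have hcycle := countPeriodic P N hper (q - 1)
    have hqm1N : (q - 1) * N = q ^ m - 1 := by rw [mul_comm]; exact hNmul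
    rw [hqm1N] at hcycle
    have hfull : ((Finset.range (q ^ m - 1)).filter P).card = q ^ m - q ^ (m - 1) := by
      have h1 := countRangePow ω hω hcE2 (fun y => Algebra.trace Kq E (b0 * y) ≠ 0)
        (by simp)
      have h2 : (Finset.univ.filter fun y : E =>
          Algebra.trace Kq E (b0 * y) ≠ 0).card = q ^ m - q ^ (m - 1) := by
        have hpart := Finset.card_filter_add_card_filter_not
          (s := (Finset.univ : Finset E))
          (p := fun y : E => Algebra.trace Kq E (b0 * y) = 0)
        rw [hfibE b0 hb0 0, Finset.card_univ, hc] at hpart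
        have hpow : q ^ (m - 1) ≤ q ^ m := Nat.pow_le_pow_right (by omega) (by omega)
        have hre : (Finset.univ.filter fun y : E =>
            ¬(Algebra.trace Kq E (b0 * y) = 0)) =
            (Finset.univ.filter fun y : E => Algebra.trace Kq E (b0 * y) ≠ 0) := rfl
        rw [hre] at hpart
        omega
      rw [hc] at h1
      rw [← h2, ← h1]
    have hsubpow : q ^ m - q ^ (m - 1) = (q - 1) * q ^ (m - 1) := by
      have h1 : q ^ m = q * q ^ (m - 1) := by
        rw [← pow_succ']; congr 1; omega
      rw [h1, Nat.sub_mul, one_mul]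
    have hcntN : ((Finset.range N).filter P).card = q ^ (m - 1) := by
      apply Nat.eq_of_mul_eq_mul_left (show 0 < q - 1 by omega)
      rw [← hcycle, hfull, hsubpow]
    rw [hnT]
    rw [countPeriodic P N hper T, hcntN]
  constructor
  · -- case a ≠ 0
    intro ha
    rw [Finset.card_filter, Fintype.sum_prod_type, Finset.sum_comm]
    have key1 : ∀ p : Fin n × Bool,
        (∑ x : E1, if cword Kq E1 E ω 1 n a b (x, p) ≠ 0 then 1 else 0)
          = q ^ m1 - q ^ (m1 - 1) := by
      rintro ⟨i, hb⟩
      rw [← Finset.card_filter]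
      cases hb
      · have h1 := hcnt1 a ha
          (Algebra.trace Kq E ((algebraMap E1 E a + b) * ω ^ (1 * (i : ℕ))))
        rw [← h1]
        congr 1
      · have h1 := hcnt1 a ha (Algebra.trace Kq E (b * ω ^ (1 * (i : ℕ))))
        rw [← h1]
        congr 1
    rw [Finset.sum_congr rfl (fun p _ => key1 p), Finset.sum_const, Finset.card_univ]
    rw [Fintype.card_prod, Fintype.card_fin, Fintype.card_bool, smul_eq_mul]
    have e1 : q ^ m1 - q ^ (m1 - 1) = q ^ (m1 - 1) * (q - 1) := by
      have h1 : q ^ m1 = q ^ (m1 - 1) * q := by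
        rw [← pow_succ]; congr 1; omega
      rw [h1, Nat.mul_sub, mul_one]
    rw [e1, hnT, ← hNmul]
    ring
  · -- case a = 0
    intro ha hb0
    subst ha
    have hpred : ∀ z : E1 × Fin n × Bool,
        cword Kq E1 E ω 1 n 0 b z = Algebra.trace Kq E (b * ω ^ (z.2.1 : ℕ)) := by
      rintro ⟨x, i, hb⟩
      cases hb <;> simp [cword]
    have hfe : (Finset.univ.filter fun z : E1 × Fin n × Bool =>
        cword Kq E1 E ω 1 n 0 b z ≠ 0)
        = Finset.univ.filter fun z : E1 × Fin n × Bool =>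
            Algebra.trace Kq E (b * ω ^ (z.2.1 : ℕ)) ≠ 0 := by
      apply Finset.filter_congr
      intro z _
      rw [hpred z]
    rw [hfe, Finset.card_filter, Fintype.sum_prod_type]
    have inner : ∀ x : E1,
        (∑ p : Fin n × Bool,
          if Algebra.trace Kq E (b * ω ^ ((x, p).2.1 : ℕ)) ≠ 0 then 1 else 0)
          = 2 * (T * q ^ (m - 1)) := by
      intro x
      rw [Fintype.sum_prod_type]
      have hbool : ∀ i : Fin n,
          (∑ hb : Bool,
            if Algebra.trace Kq E (b * ω ^ ((x, i, hb).2.1 : ℕ)) ≠ 0 then 1 else 0)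
          = 2 * (if Algebra.trace Kq E (b * ω ^ (i : ℕ)) ≠ 0 then 1 else 0) := by
        intro i
        rw [Fintype.sum_bool]
        ring_nf
      rw [Finset.sum_congr rfl (fun i _ => hbool i), ← Finset.mul_sum]
      congr 1
      rw [Fin.sum_univ_eq_sum_range (fun i =>
        if Algebra.trace Kq E (b * ω ^ i) ≠ 0 then 1 else 0) n]
      rw [← Finset.card_filter]
      exact hZ b hb0
    rw [Finset.sum_congr rfl (fun x _ => inner x), Finset.sum_const, Finset.card_univ,
      hc1, smul_eq_mul]
    have e2 : q ^ m1 * q ^ (m - 1) = q ^ (m1 - 1) * q ^ m := by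
      rw [← pow_add, ← pow_add]; congr 1; omega
    calc q ^ m1 * (2 * (T * q ^ (m - 1))) = 2 * T * (q ^ m1 * q ^ (m - 1)) := by ring
      _ = 2 * T * (q ^ (m1 - 1) * q ^ m) := by rw [e2]


lemma cword_sub (Kq E1 E : Type*) [Field Kq] [Field E1] [Field E]
    [Algebra Kq E1] [Algebra Kq E] [Algebra E1 E] [IsScalarTower Kq E1 E]
    (ω : E) (n : ℕ) (t : Kq) (a a' : E1) (b b' : E) (z : E1 × Fin n × Bool) :
    cword Kq E1 E ω 1 n a' b' z - t * cword Kq E1 E ω 1 n a b z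
      = cword Kq E1 E ω 1 n (a' - algebraMap Kq E1 t * a)
          (b' - algebraMap Kq E t * b) z := by
  have keyE1 : ∀ y : E1, Algebra.trace Kq E1 (algebraMap Kq E1 t * y)
      = t * Algebra.trace Kq E1 y := by
    intro y; rw [← Algebra.smul_def, map_smul, smul_eq_mul]
  have keyE : ∀ y : E, Algebra.trace Kq E (algebraMap Kq E t * y)
      = t * Algebra.trace Kq E y := by
    intro y; rw [← Algebra.smul_def, map_smul, smul_eq_mul]
  rcases z with ⟨x, i, hb⟩
  cases hb
  · show (Algebra.trace Kq E1 (a' * x) +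
        Algebra.trace Kq E ((algebraMap E1 E a' + b') * ω ^ (1 * (i : ℕ))))
      - t * (Algebra.trace Kq E1 (a * x) +
        Algebra.trace Kq E ((algebraMap E1 E a + b) * ω ^ (1 * (i : ℕ))))
      = Algebra.trace Kq E1 ((a' - algebraMap Kq E1 t * a) * x) +
        Algebra.trace Kq E ((algebraMap E1 E (a' - algebraMap Kq E1 t * a)
          + (b' - algebraMap Kq E t * b)) * ω ^ (1 * (i : ℕ)))
    have harg : (algebraMap E1 E (a' - algebraMap Kq E1 t * a)
        + (b' - algebraMap Kq E t * b)) * ω ^ (1 * (i : ℕ))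
        = (algebraMap E1 E a' + b') * ω ^ (1 * (i : ℕ))
          - algebraMap Kq E t * ((algebraMap E1 E a + b) * ω ^ (1 * (i : ℕ))) := by
      rw [map_sub, map_mul, ← IsScalarTower.algebraMap_apply]
      ring
    rw [harg, map_sub, keyE, sub_mul, map_sub, mul_assoc, keyE1]
    ring
  · show (Algebra.trace Kq E1 (a' * x) +
        Algebra.trace Kq E (b' * ω ^ (1 * (i : ℕ))))
      - t * (Algebra.trace Kq E1 (a * x) +
        Algebra.trace Kq E (b * ω ^ (1 * (i : ℕ))))
      = Algebra.trace Kq E1 ((a' - algebraMap Kq E1 t * a) * x) +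
        Algebra.trace Kq E ((b' - algebraMap Kq E t * b) * ω ^ (1 * (i : ℕ)))
    have harg : (b' - algebraMap Kq E t * b) * ω ^ (1 * (i : ℕ))
        = b' * ω ^ (1 * (i : ℕ))
          - algebraMap Kq E t * (b * ω ^ (1 * (i : ℕ))) := by ring
    rw [harg, map_sub, keyE, sub_mul, map_sub, mul_assoc, keyE1]
    ring

/-- If `m > 1` and `h = 1`, the two-weight code `C_K` is minimal: its nonzero weights
`w_1 = 2nq^{m_1−1}(q−1)` and `w_2 = 2nq^{m_1+m−1}(q−1)/(q^m−1)` satisfy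
`w_min/w_max > (q−1)/q`, and every nonzero codeword covers only its scalar
multiples. -/
theorem stmt16 (q m m1 n : ℕ) (Kq E1 E : Type*)
    [Field Kq] [Fintype Kq] [DecidableEq Kq]
    [Field E1] [Fintype E1] [Field E] [Fintype E]
    [Algebra Kq E1] [Algebra Kq E] [Algebra E1 E] [IsScalarTower Kq E1 E]
    (hq : q = Fintype.card Kq) (hqodd : Odd q)
    (hm1 : m1 ∣ m) (hm : 1 < m)
    (hc1 : Fintype.card E1 = q ^ m1) (hc : Fintype.card E = q ^ m)
    (ω : E) (hω : ∀ x : E, x ≠ 0 → ∃ k : ℕ, x = ω ^ k)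
    (hn0 : 0 < n) (hn : (q ^ m - 1) / (q - 1) ∣ n) :
    ((q : ℚ) - 1) / (q : ℚ) <
      ((2 * n * q ^ (m1 - 1) * (q - 1) : ℕ) : ℚ) /
        (2 * n * (q : ℚ) ^ (m1 + m - 1) * ((q : ℚ) - 1) / ((q : ℚ) ^ m - 1)) ∧
    ∀ a : E1, ∀ b : E, (a, b) ≠ (0, 0) →
      ∀ a' : E1, ∀ b' : E,
        (∀ z : E1 × Fin n × Bool,
            cword Kq E1 E ω 1 n a' b' z ≠ 0 → cword Kq E1 E ω 1 n a b z ≠ 0) →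
          ∃ s : Kq, cword Kq E1 E ω 1 n a' b' = s • cword Kq E1 E ω 1 n a b := by
  classical
  have hq2 : 2 ≤ q := hq ▸ Fintype.one_lt_card
  have hq3 : 3 ≤ q := by rcases hqodd with ⟨k, hk⟩; omega
  have hm1pos : 1 ≤ m1 := by
    rcases hm1 with ⟨c, rfl⟩
    by_contra h
    interval_cases m1 <;> omega
  have hqm : q ^ 2 ≤ q ^ m := Nat.pow_le_pow_right (by omega) hm
  have hq2' : q * q = q ^ 2 := by ring
  have hqmbig : q + 1 ≤ q ^ m := by nlinarith
  constructor
  · -- arithmetic part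
    have hQ3 : (3 : ℚ) ≤ (q : ℚ) := by exact_mod_cast hq3
    have hQ0 : (0 : ℚ) < (q : ℚ) := by linarith
    have hQ1 : (1 : ℚ) < (q : ℚ) := by linarith
    have hQm : (q : ℚ) < (q : ℚ) ^ m := by
      calc (q : ℚ) = (q : ℚ) ^ 1 := (pow_one _).symm
        _ < (q : ℚ) ^ m := by
            apply pow_lt_pow_right₀ hQ1 hm
    have hQm1 : (1 : ℚ) < (q : ℚ) ^ m := by linarith
    have hn0' : (0 : ℚ) < (n : ℚ) := by exact_mod_cast hn0
    have hA : ((2 * n * q ^ (m1 - 1) * (q - 1) : ℕ) : ℚ)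
        = 2 * (n : ℚ) * (q : ℚ) ^ (m1 - 1) * ((q : ℚ) - 1) := by
      push_cast [Nat.cast_sub (show 1 ≤ q by omega)]
      ring
    have hpow : (q : ℚ) ^ (m1 + m - 1) = (q : ℚ) ^ (m1 - 1) * (q : ℚ) ^ m := by
      rw [← pow_add]; congr 1; omega
    have hu0 : (0 : ℚ) < (q : ℚ) ^ (m1 - 1) := by positivity
    have hrhs : ((2 * n * q ^ (m1 - 1) * (q - 1) : ℕ) : ℚ) /
        (2 * n * (q : ℚ) ^ (m1 + m - 1) * ((q : ℚ) - 1) / ((q : ℚ) ^ m - 1))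
        = ((q : ℚ) ^ m - 1) / (q : ℚ) ^ m := by
      have hne1 : (q : ℚ) - 1 ≠ 0 := by linarith
      have hne2 : (q : ℚ) ^ m - 1 ≠ 0 := by linarith
      have hne3 : (n : ℚ) ≠ 0 := ne_of_gt hn0'
      have hne4 : (q : ℚ) ^ (m1 - 1) ≠ 0 := ne_of_gt hu0
      have hne5 : (q : ℚ) ^ m ≠ 0 := by positivity
      rw [hA, hpow]
      field_simp
    rw [hrhs, div_lt_div_iff₀ hQ0 (by positivity)]
    nlinarith
  · -- minimality part
    intro a b hab a' b' hsupp
    set c : E1 × Fin n × Bool → Kq := cword Kq E1 E ω 1 n a b with hcdef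
    set c' : E1 × Fin n × Bool → Kq := cword Kq E1 E ω 1 n a' b' with hc'def
    by_cases hex : ∃ t : Kq, a' - algebraMap Kq E1 t * a = 0
        ∧ b' - algebraMap Kq E t * b = 0
    · obtain ⟨t, ht1, ht2⟩ := hex
      refine ⟨t, ?_⟩
      funext z
      have h := cword_sub Kq E1 E ω n t a a' b b' z
      rw [ht1, ht2] at h
      have hz0 : cword Kq E1 E ω 1 n (0 : E1) (0 : E) z = 0 := by
        rcases z with ⟨x, i, hb⟩
        cases hb <;> simp [cword]
      rw [hz0] at h
      have h2 := sub_eq_zero.mp h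
      rw [Pi.smul_apply, smul_eq_mul]
      exact h2
    · exfalso
      -- here hex : no t works; derive contradiction via weights
      set N : ℕ := (q ^ m - 1) / (q - 1) with hN
      set T : ℕ := n / N with hT
      have hdvd : (q - 1) ∣ (q ^ m - 1) := by
        have := Nat.sub_dvd_pow_sub_pow q 1 m
        simpa using this
      have hNmul : N * (q - 1) = q ^ m - 1 := Nat.div_mul_cancel hdvd
      have hNpos : 0 < N := by
        rcases Nat.eq_zero_or_pos N with h | h
        · rw [h, zero_mul] at hNmul; omega
        · exact h
      have hnT : n = T * N := (Nat.div_mul_cancel hn).symm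
      have hTpos : 0 < T := by
        rcases Nat.eq_zero_or_pos T with h | h
        · rw [h, zero_mul] at hnT; omega
        · exact h
      set w1 : ℕ := 2 * T * (q ^ (m1 - 1) * (q ^ m - 1)) with hw1
      set w2 : ℕ := 2 * T * (q ^ (m1 - 1) * q ^ m) with hw2
      have hW := fun (u : E1) (v : E) =>
        weight_formula q m m1 n Kq E1 E hq hqodd hm1 hm hc1 hc ω hω hn0 hn u v
      have hw12 : w1 ≤ w2 := by
        rw [hw1, hw2]
        gcongr
        omega
      -- weight of any nonzero codeword is at least w1 and the weight of c is at most w2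
      have hwlow : ∀ (u : E1) (v : E), ¬(u = 0 ∧ v = 0) →
          w1 ≤ (Finset.univ.filter fun z : E1 × Fin n × Bool =>
            cword Kq E1 E ω 1 n u v z ≠ 0).card := by
        intro u v huv
        by_cases hu : u = 0
        · have hv : v ≠ 0 := fun h => huv ⟨hu, h⟩
          rw [(hW u v).2 hu hv]
          exact hw12
        · rw [(hW u v).1 hu]
      have hwhigh : (Finset.univ.filter fun z : E1 × Fin n × Bool =>
          c z ≠ 0).card ≤ w2 := by
        by_cases hu : a = 0
        · have hv : b ≠ 0 := by
            intro h
            exact hab (by rw [hu, h])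
          rw [(hW a b).2 hu hv]
        · rw [(hW a b).1 hu]
          exact hw12
      -- the sum over t of weights of c' - t c
      have hWt : ∀ t : Kq,
          (Finset.univ.filter fun z : E1 × Fin n × Bool =>
            cword Kq E1 E ω 1 n (a' - algebraMap Kq E1 t * a)
              (b' - algebraMap Kq E t * b) z ≠ 0).card
          = (Finset.univ.filter fun z : E1 × Fin n × Bool =>
              c' z - t * c z ≠ 0).card := by
        intro t
        congr 1
        apply Finset.filter_congr
        intro z _
        rw [← cword_sub]
      have hzsum : ∀ z : E1 × Fin n × Bool,
          (∑ t : Kq, if c' z - t * c z ≠ 0 then 1 else 0)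
            = if c z ≠ 0 then q - 1 else 0 := by
        intro z
        by_cases hcz : c z = 0
        · have hcz' : c' z = 0 := by
            by_contra h
            exact (hsupp z h) hcz
          simp [hcz, hcz']
        · rw [if_pos hcz, ← Finset.card_filter]
          have hone : (Finset.univ.filter fun t : Kq => c' z - t * c z = 0)
              = {c' z * (c z)⁻¹} := by
            ext t
            simp only [Finset.mem_filter, Finset.mem_univ, true_and,
              Finset.mem_singleton]
            rw [sub_eq_zero]
            constructor
            · intro h
              rw [h]
              field_simp
            · intro h
              rw [h]
              field_simp
          have hpart := Finset.card_filter_add_card_filter_not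
            (s := (Finset.univ : Finset Kq)) (p := fun t : Kq => c' z - t * c z = 0)
          rw [hone, Finset.card_singleton, Finset.card_univ, ← hq] at hpart
          have hre : (Finset.univ.filter fun t : Kq => ¬(c' z - t * c z = 0))
              = (Finset.univ.filter fun t : Kq => c' z - t * c z ≠ 0) := rfl
          rw [hre] at hpart
          omega
      have hsum : (∑ t : Kq,
          (Finset.univ.filter fun z : E1 × Fin n × Bool =>
            c' z - t * c z ≠ 0).card)
          = (q - 1) * (Finset.univ.filter fun z : E1 × Fin n × Bool =>
              c z ≠ 0).card := by
        have h1 : ∀ t : Kq, (Finset.univ.filter fun z : E1 × Fin n × Bool =>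
            c' z - t * c z ≠ 0).card
            = ∑ z : E1 × Fin n × Bool, if c' z - t * c z ≠ 0 then 1 else 0 := by
          intro t; rw [Finset.card_filter]
        rw [Finset.sum_congr rfl (fun t _ => h1 t), Finset.sum_comm]
        rw [Finset.sum_congr rfl (fun z _ => hzsum z)]
        rw [Finset.card_filter, Finset.mul_sum]
        apply Finset.sum_congr rfl
        intro z _
        rw [mul_ite, mul_one, mul_zero]
      -- lower bound on the sum
      have hlow : q * w1 ≤ ∑ t : Kq,
          (Finset.univ.filter fun z : E1 × Fin n × Bool =>
            c' z - t * c z ≠ 0).card := by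
        have h1 : ∀ t : Kq, w1 ≤ (Finset.univ.filter fun z : E1 × Fin n × Bool =>
            c' z - t * c z ≠ 0).card := by
          intro t
          rw [← hWt t]
          apply hwlow
          intro ⟨h1', h2'⟩
          exact hex ⟨t, h1', h2'⟩
        calc q * w1 = (Finset.univ : Finset Kq).card * w1 := by
              rw [Finset.card_univ, ← hq]
          _ = (Finset.univ : Finset Kq).card • w1 := (smul_eq_mul _ _).symm
          _ ≤ ∑ t : Kq, (Finset.univ.filter fun z : E1 × Fin n × Bool =>
              c' z - t * c z ≠ 0).card :=
            Finset.card_nsmul_le_sum _ _ _ (fun t _ => h1 t)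
      -- upper bound
      have hup : (∑ t : Kq,
          (Finset.univ.filter fun z : E1 × Fin n × Bool =>
            c' z - t * c z ≠ 0).card) ≤ (q - 1) * w2 := by
        rw [hsum]
        exact Nat.mul_le_mul_left _ hwhigh
      -- the key numeric contradiction
      have hkey : (q - 1) * w2 < q * w1 := by
        have h1 : (q - 1) * q ^ m = q * q ^ m - q ^ m := by
          rw [Nat.sub_mul, one_mul]
        have h2 : q * (q ^ m - 1) = q * q ^ m - q := by
          rw [Nat.mul_sub, mul_one]
        have h4 : q ^ m ≤ q * q ^ m := Nat.le_mul_of_pos_left _ (by omega)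
        have h3 : (q - 1) * q ^ m < q * (q ^ m - 1) := by omega
        have hpos : 0 < 2 * T * q ^ (m1 - 1) := by positivity
        calc (q - 1) * w2 = 2 * T * q ^ (m1 - 1) * ((q - 1) * q ^ m) := by
              rw [hw2]; ring
          _ < 2 * T * q ^ (m1 - 1) * (q * (q ^ m - 1)) :=
              mul_lt_mul_of_pos_left h3 hpos
          _ = q * w1 := by rw [hw1]; ring
      exact absurd (le_trans hlow hup) (not_le.mpr hkey)
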